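/- arXiv:1202.1432 — 2 statements merged into one kernel-verified Lean document; each statement's English description precedes it below -/
import Mathlib

section
/- Let δ ∈ (0, T), t₀, t₁ ∈ [0, T−δ], λ ∈ [0,1], t_λ = λ t₁ + (1−λ) t₀, and τ̇₁ = (T−t_λ)/(T−t₁). Then λ·|1 − 1/√τ̇₁| ≤ (1/(2δ))·λ(1−λ)·|t₀ − t₁|. -/
theorem sqrt_time_change_estimate
    (T δ t₀ t₁ lam : ℝ) (hδ : 0 < δ) (hδT : δ < T)
    (ht₀ : t₀ ∈ Set.Icc 0 (T - δ)) (ht₁ : t₁ ∈ Set.Icc 0 (T - δ))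
    (hlam : lam ∈ Set.Icc (0:ℝ) 1)
    (tlam : ℝ) (htlam : tlam = lam * t₁ + (1 - lam) * t₀)
    (τdot₁ : ℝ) (hτ₁ : τdot₁ = (T - tlam) / (T - t₁)) :
    lam * |1 - 1 / Real.sqrt τdot₁| ≤ (1 / (2 * δ)) * (lam * (1 - lam)) * |t₀ - t₁| := by
  obtain ⟨h00, h01⟩ := ht₀
  obtain ⟨h10, h11⟩ := ht₁
  obtain ⟨hl0, hl1⟩ := hlam
  have hu : (0:ℝ) < T - t₁ := by linarith
  have htl : tlam ≤ T - δ := by rw [htlam]; nlinarith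
  have hτpos : 0 < τdot₁ := by
    rw [hτ₁]; exact div_pos (by linarith) hu
  have hτge : δ / (T - t₁) ≤ τdot₁ := by
    rw [hτ₁]; gcongr; linarith
  set s := Real.sqrt τdot₁ with hsdef
  have hs0 : 0 < s := Real.sqrt_pos.mpr hτpos
  have hs2 : s ^ 2 = τdot₁ := Real.sq_sqrt hτpos.le
  set b := Real.sqrt (δ / (T - t₁)) with hbdef
  have hb0 : 0 < b := Real.sqrt_pos.mpr (div_pos hδ hu)
  have hb2 : b ^ 2 = δ / (T - t₁) := Real.sq_sqrt (div_pos hδ hu).le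
  have hb1 : b ≤ 1 := Real.sqrt_le_one.mpr (by rw [div_le_one hu]; linarith)
  have hsb : b ≤ s := Real.sqrt_le_sqrt hτge
  have hkey : 2 * δ / (T - t₁) ≤ s * (s + 1) := by
    have h1 : b ^ 2 ≤ s ^ 2 := by nlinarith
    have h2b : 2 * δ / (T - t₁) = 2 * b ^ 2 := by rw [hb2]; ring
    have hbb : b ^ 2 ≤ b := by nlinarith
    nlinarith [h1, hbb, hsb]
  -- rewrite |1 - 1/s| as |τ - 1| / (s*(s+1))
  have habs : |s - 1| * (s + 1) = |τdot₁ - 1| := by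
    rw [← abs_of_pos (show (0:ℝ) < s + 1 by linarith), ← abs_mul]
    congr 1
    nlinarith
  have h1 : |1 - 1 / s| = |τdot₁ - 1| / (s * (s + 1)) := by
    have : 1 - 1 / s = (s - 1) / s := by field_simp
    rw [this, abs_div, abs_of_pos hs0, ← habs]
    field_simp
  -- compute |τ - 1|
  have hτ1 : |τdot₁ - 1| = (1 - lam) * |t₀ - t₁| / (T - t₁) := by
    have : τdot₁ - 1 = (1 - lam) * (t₁ - t₀) / (T - t₁) := by
      rw [hτ₁, htlam]; field_simp; ring
    rw [this, abs_div, abs_of_pos hu, abs_mul, abs_of_nonneg (by linarith : (0:ℝ) ≤ 1 - lam),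
      abs_sub_comm]
  have hss : 0 < s * (s + 1) := by positivity
  have hmain : |1 - 1 / s| ≤ (1 - lam) * |t₀ - t₁| / (2 * δ) := by
    rw [h1, hτ1]
    rw [div_le_div_iff₀ hss (by linarith : (0:ℝ) < 2 * δ)]
    have h2 : 2 * δ ≤ s * (s + 1) * (T - t₁) := by
      rw [div_le_iff₀ hu] at hkey; linarith
    have habsnn : (0:ℝ) ≤ (1 - lam) * |t₀ - t₁| := mul_nonneg (by linarith) (abs_nonneg _)
    calc (1 - lam) * |t₀ - t₁| / (T - t₁) * (2 * δ)
        ≤ (1 - lam) * |t₀ - t₁| / (T - t₁) * (s * (s + 1) * (T - t₁)) := by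
          exact mul_le_mul_of_nonneg_left h2 (div_nonneg (mul_nonneg (by linarith) (abs_nonneg _)) hu.le)
      _ = (1 - lam) * |t₀ - t₁| * (s * (s + 1)) := by field_simp
  calc lam * |1 - 1 / s| ≤ lam * ((1 - lam) * |t₀ - t₁| / (2 * δ)) := by
        apply mul_le_mul_of_nonneg_left hmain hl0
    _ = (1 / (2 * δ)) * (lam * (1 - lam)) * |t₀ - t₁| := by field_simp
end

section
/- Let δ ∈ (0, T), t₀, t₁ ∈ [0, T−δ], λ ∈ [0,1], t_λ = λ t₁ + (1−λ) t₀, and for i = 0,1 set τ̇ᵢ = (T−t_λ)/(T−tᵢ). Then |λ·(1 − 1/√τ̇₁) + (1−λ)·(1 − 1/√τ̇₀)| ≤ (1/δ²)·λ(1−λ)·|t₁ − t₀|². -/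
private lemma aux_sqrt_est (sδ sa sb sm lam : ℝ) (hδ : 0 < sδ)
    (ha : sδ ≤ sa) (hb : sδ ≤ sb) (hm : sδ ≤ sm)
    (hm2 : sm ^ 2 = lam * sb ^ 2 + (1 - lam) * sa ^ 2)
    (h0 : 0 ≤ lam) (h1 : lam ≤ 1) :
    |1 - (lam * sb + (1 - lam) * sa) / sm|
      ≤ (1 / sδ ^ 4) * (lam * (1 - lam)) * (sa ^ 2 - sb ^ 2) ^ 2 := by
  have hsm0 : 0 < sm := lt_of_lt_of_le hδ hm
  set s := lam * sb + (1 - lam) * sa with hs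
  have hs0 : sδ ≤ s := by nlinarith
  have hsq : s ^ 2 ≤ sm ^ 2 := by nlinarith [mul_nonneg (mul_nonneg h0 (show (0:ℝ) ≤ 1 - lam by linarith)) (sq_nonneg (sa - sb))]
  have hsle : s ≤ sm := le_of_pow_le_pow_left₀ two_ne_zero hsm0.le hsq
  have hspos : 0 < sm + s := by linarith [lt_of_lt_of_le hδ hs0]
  have habs : |1 - s / sm| = (sm - s) / sm := by
    rw [abs_of_nonneg]
    · field_simp
    · have : s / sm ≤ 1 := by rw [div_le_one hsm0]; exact hsle
      linarith
  have hδ4 : (0:ℝ) < sδ ^ 4 := by positivity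
  rw [habs, div_le_iff₀ hsm0,
    show (1:ℝ) / sδ ^ 4 * (lam * (1 - lam)) * (sa ^ 2 - sb ^ 2) ^ 2 * sm
      = lam * (1 - lam) * (sa ^ 2 - sb ^ 2) ^ 2 * sm / sδ ^ 4 from by ring,
    le_div_iff₀ hδ4]
  set K := lam * (1 - lam) * (sa - sb) ^ 2 with hK
  have hK0 : 0 ≤ K := by
    apply mul_nonneg (mul_nonneg h0 (by linarith)) (sq_nonneg _)
  have h1' : (sm - s) * (sm + s) = K := by nlinarith [hm2]
  have h2 : 4 * sδ ^ 2 ≤ (sa + sb) ^ 2 := by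
    nlinarith [mul_nonneg (show (0:ℝ) ≤ sa + sb - 2 * sδ by linarith)
      (show (0:ℝ) ≤ sa + sb + 2 * sδ by linarith)]
  have h3 : 2 * sδ ^ 2 ≤ sm * (sm + s) := by
    nlinarith [mul_le_mul hm (show 2 * sδ ≤ sm + s by linarith) (by positivity)
      (hδ.le.trans hm)]
  have hprod : sδ ^ 4 ≤ (sa + sb) ^ 2 * (sm * (sm + s)) := by
    nlinarith [mul_le_mul h2 h3 (by positivity) (le_trans (by positivity) h2)]
  have hmain : (sm - s) * sδ ^ 4 * (sm + s)
      ≤ lam * (1 - lam) * (sa ^ 2 - sb ^ 2) ^ 2 * sm * (sm + s) := by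
    calc (sm - s) * sδ ^ 4 * (sm + s) = K * sδ ^ 4 := by rw [← h1']; ring
    _ ≤ K * ((sa + sb) ^ 2 * (sm * (sm + s))) := mul_le_mul_of_nonneg_left hprod hK0
    _ = lam * (1 - lam) * (sa ^ 2 - sb ^ 2) ^ 2 * sm * (sm + s) := by rw [hK]; ring
  exact le_of_mul_le_mul_right hmain hspos

theorem sqrt_time_change_second_order_estimate
    (T δ t₀ t₁ lam : ℝ) (hδ : 0 < δ) (hδT : δ < T)
    (ht₀ : t₀ ∈ Set.Icc 0 (T - δ)) (ht₁ : t₁ ∈ Set.Icc 0 (T - δ))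
    (hlam : lam ∈ Set.Icc (0:ℝ) 1)
    (tlam : ℝ) (htlam : tlam = lam * t₁ + (1 - lam) * t₀)
    (τdot₀ τdot₁ : ℝ)
    (hτ₀ : τdot₀ = (T - tlam) / (T - t₀)) (hτ₁ : τdot₁ = (T - tlam) / (T - t₁)) :
    |lam * (1 - 1 / Real.sqrt τdot₁) + (1 - lam) * (1 - 1 / Real.sqrt τdot₀)|
      ≤ (1 / δ ^ 2) * (lam * (1 - lam)) * |t₁ - t₀| ^ 2 := by
  obtain ⟨ht₀0, ht₀T⟩ := ht₀
  obtain ⟨ht₁0, ht₁T⟩ := ht₁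
  obtain ⟨h0, h1⟩ := hlam
  set a := T - t₀ with hadef
  set b := T - t₁ with hbdef
  have haδ : δ ≤ a := by simp [hadef]; linarith
  have hbδ : δ ≤ b := by simp [hbdef]; linarith
  have hm : T - tlam = lam * b + (1 - lam) * a := by rw [htlam, hadef, hbdef]; ring
  set m := lam * b + (1 - lam) * a with hmdef
  have hmδ : δ ≤ m := by nlinarith
  have hm0 : 0 < m := lt_of_lt_of_le hδ hmδ
  have ha0 : 0 < a := lt_of_lt_of_le hδ haδ
  have hb0 : 0 < b := lt_of_lt_of_le hδ hbδ
  have hτ₁' : τdot₁ = m / b := by rw [hτ₁, hm]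
  have hτ₀' : τdot₀ = m / a := by rw [hτ₀, hm]
  rw [hτ₁', hτ₀', Real.sqrt_div hm0.le, Real.sqrt_div hm0.le, one_div_div, one_div_div]
  set sa := Real.sqrt a with hsa
  set sb := Real.sqrt b with hsb
  set sm := Real.sqrt m with hsm
  have hsa2 : sa ^ 2 = a := Real.sq_sqrt ha0.le
  have hsb2 : sb ^ 2 = b := Real.sq_sqrt hb0.le
  have hsm2 : sm ^ 2 = m := Real.sq_sqrt hm0.le
  set sδ := Real.sqrt δ with hsδ
  have hsδ2 : sδ ^ 2 = δ := Real.sq_sqrt hδ.le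
  have hsδ0 : 0 < sδ := Real.sqrt_pos.mpr hδ
  have hsaδ : sδ ≤ sa := Real.sqrt_le_sqrt haδ
  have hsbδ : sδ ≤ sb := Real.sqrt_le_sqrt hbδ
  have hsmδ : sδ ≤ sm := Real.sqrt_le_sqrt hmδ
  have hsm0 : 0 < sm := lt_of_lt_of_le hsδ0 hsmδ
  have key := aux_sqrt_est sδ sa sb sm lam hsδ0 hsaδ hsbδ hsmδ
    (by rw [hsa2, hsb2, hsm2]) h0 h1
  have e1 : lam * (1 - sb / sm) + (1 - lam) * (1 - sa / sm)
      = 1 - (lam * sb + (1 - lam) * sa) / sm := by field_simp; ring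
  rw [e1]
  have e2 : (sa ^ 2 - sb ^ 2) ^ 2 = |t₁ - t₀| ^ 2 := by
    rw [hsa2, hsb2, sq_abs]; ring
  have e3 : (1 : ℝ) / sδ ^ 4 = 1 / δ ^ 2 := by
    rw [← hsδ2]; ring
  rw [e2, e3] at key
  exact key
end
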